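/- If P[i] equals the character of T immediately preceding an occurrence of the longest matched prefix at position i+1 (i.e., P[i] = T[MS[i+1].pos − 1] where T[MS[i+1].pos .. MS[i+1].pos + MS[i+1].len − 1] = P[i+1 .. i+MS[i+1].len]), then MS[i].len = MS[i+1].len + 1 and MS[i+1].pos − 1 is a valid matching-statistics position for i. -/

import Mathlib

/-- if `P[i] = T[p-1]` where `p = MS[i+1].pos` and
`T[p..p+MS[i+1].len-1] = P[i+1..i+MS[i+1].len]`, then `MS[i].len = MS[i+1].len + 1`
and `p - 1` is a valid matching-statistics position for `i`. -/
theorem ms_lf_step {α : Type*} [DecidableEq α] (P T : List α) (ms : ℕ → ℕ)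
    (hms_le : ∀ i, ms i ≤ P.length - i)
    (hms_occ : ∀ i, ((P.drop i).take (ms i)) <:+: T)
    (hms_max : ∀ i l, l ≤ P.length - i → ((P.drop i).take l) <:+: T → l ≤ ms i)
    (i p : ℕ) (hi : i < P.length) (hp : 1 ≤ p)
    (hseglen : ms (i + 1) ≤ T.length - p)
    (hseg : (T.drop p).take (ms (i + 1)) = (P.drop (i + 1)).take (ms (i + 1)))
    (hc : T[p - 1]? = P[i]?) :
    ms i = ms (i + 1) + 1 ∧
      (T.drop (p - 1)).take (ms (i + 1) + 1) = (P.drop i).take (ms (i + 1) + 1) := by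
  have hPi : P[i]? = some P[i] := List.getElem?_eq_getElem hi
  have hTlt : p - 1 < T.length := by
    by_contra h
    rw [List.getElem?_eq_none (not_lt.mp h), hPi] at hc
    exact Option.noConfusion rfl (heq_of_eq hc)
  have hp1 : p - 1 + 1 = p := Nat.succ_pred_eq_of_pos hp
  have hTc : T[p - 1] = P[i] := by
    rw [List.getElem?_eq_getElem hTlt, hPi] at hc
    exact Option.some.inj hc
  have hdropT : T.drop (p - 1) = T[p - 1] :: T.drop p := by
    rw [List.drop_eq_getElem_cons hTlt, hp1]
  have hdropP : P.drop i = P[i] :: P.drop (i + 1) := List.drop_eq_getElem_cons hi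
  have hkey : (T.drop (p - 1)).take (ms (i + 1) + 1)
      = (P.drop i).take (ms (i + 1) + 1) := by
    rw [hdropT, hdropP, List.take_succ_cons, List.take_succ_cons, hTc, hseg]
  refine ⟨?_, hkey⟩
  -- lower bound: ms (i+1) + 1 ≤ ms i
  have hle1 : ms (i + 1) + 1 ≤ P.length - i := by
    have := hms_le (i + 1)
    omega
  have hinf : (P.drop i).take (ms (i + 1) + 1) <:+: T := by
    rw [← hkey]
    exact ((T.drop (p - 1)).take_prefix _).isInfix.trans (T.drop_suffix _).isInfix
  have hlb : ms (i + 1) + 1 ≤ ms i := hms_max i _ hle1 hinf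
  -- upper bound: ms i ≤ ms (i+1) + 1
  have hub : ms i ≤ ms (i + 1) + 1 := by
    rcases Nat.eq_zero_or_pos (ms i) with h0 | hpos
    · omega
    · have hsub : (P.drop (i + 1)).take (ms i - 1) <:+: T := by
        have h1 : ((P.drop i).take (ms i)).drop 1 = (P.drop (i + 1)).take (ms i - 1) := by
          rw [List.drop_take, List.drop_drop]
        have := (List.drop_suffix 1 ((P.drop i).take (ms i))).isInfix.trans (hms_occ i)
        rwa [h1] at this
      have := hms_max (i + 1) (ms i - 1) (by have := hms_le i; omega) hsub
      omega
  omega
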